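/- Let φ^z : R^n → R^n be the time-1 map of the ODE y'(u) = F(y(u))z, where F : R^n → R^{n×m} has bounded entries with bounded Lipschitz-continuous derivatives. Then there is a constant C > 0, independent of x and z, such that ‖φ^z(x) - x - F(x)z‖ ≤ C‖z‖² for all x ∈ R^n, z ∈ R^m. -/
import Mathlib


/-- Second-order Taylor estimate for the Marcus jump map: if `φ^z` is the time-1 flow of
`y' = F(y)z` with `F` bounded with bounded Lipschitz derivatives, then
`‖φ^z(x) - x - F(x)z‖ ≤ C‖z‖²` for a constant `C` independent of `x` and `z`. -/
theorem marcus_map_taylor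
    (n m : ℕ)
    (F : EuclideanSpace ℝ (Fin n) → (EuclideanSpace ℝ (Fin m) →L[ℝ] EuclideanSpace ℝ (Fin n)))
    (KF : ℝ) (hFbdd : ∀ x, ‖F x‖ ≤ KF)
    (KL : ℝ) (hFLip : LipschitzWith (Real.toNNReal KL) F)
    (hFdiff : ∀ z : EuclideanSpace ℝ (Fin m),
      Differentiable ℝ (fun x => F x z))
    (KD : ℝ) (hFderiv_bdd : ∀ (z : EuclideanSpace ℝ (Fin m)) (x),
      ‖fderiv ℝ (fun y => F y z) x‖ ≤ KD * ‖z‖)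
    (hFderiv_lip : ∀ z : EuclideanSpace ℝ (Fin m),
      LipschitzWith (Real.toNNReal (KD * ‖z‖)) (fun x => fderiv ℝ (fun y => F y z) x))
    (φ : EuclideanSpace ℝ (Fin m) → EuclideanSpace ℝ (Fin n) → EuclideanSpace ℝ (Fin n))
    (hφ : ∀ z x, ∃ y : ℝ → EuclideanSpace ℝ (Fin n),
      y 0 = x ∧ (∀ u : ℝ, HasDerivAt y (F (y u) z) u) ∧ φ z x = y 1) :
    ∃ C > (0:ℝ), ∀ (x : EuclideanSpace ℝ (Fin n)) (z : EuclideanSpace ℝ (Fin m)),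
      ‖φ z x - x - F x z‖ ≤ C * ‖z‖ ^ 2 := by
  classical
  set L : ℝ := (Real.toNNReal KL : ℝ) with hL
  have hKF : 0 ≤ KF := le_trans (norm_nonneg _) (hFbdd 0)
  have hL0 : 0 ≤ L := (Real.toNNReal KL).coe_nonneg
  refine ⟨KF * L + 1, by positivity, ?_⟩
  intro x z
  obtain ⟨y, h0, hderiv, hφx⟩ := hφ z x
  -- Step 1: ‖y u - x‖ ≤ KF * ‖z‖ for u ∈ [0,1]
  have hstep1 : ∀ u ∈ Set.Icc (0:ℝ) 1, ‖y u - x‖ ≤ KF * ‖z‖ := by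
    intro u hu
    have h := Convex.norm_image_sub_le_of_norm_hasDerivWithin_le
      (f := y) (f' := fun v => F (y v) z) (s := Set.Icc (0:ℝ) 1) (C := KF * ‖z‖)
      (fun v _ => (hderiv v).hasDerivWithinAt)
      (fun v _ => le_trans ((F (y v)).le_opNorm z)
        (mul_le_mul_of_nonneg_right (hFbdd _) (norm_nonneg z)))
      (convex_Icc 0 1) ⟨le_refl 0, zero_le_one⟩ hu
    calc ‖y u - x‖ = ‖y u - y 0‖ := by rw [h0]
      _ ≤ KF * ‖z‖ * ‖u - 0‖ := h
      _ ≤ KF * ‖z‖ * 1 := by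
          apply mul_le_mul_of_nonneg_left _ (by positivity)
          rw [sub_zero, Real.norm_eq_abs, abs_of_nonneg hu.1]; exact hu.2
      _ = KF * ‖z‖ := mul_one _
  -- Step 2: g u := y u - u • F x z
  set g : ℝ → EuclideanSpace ℝ (Fin n) := fun u => y u - u • F x z with hg
  have hgderiv : ∀ u : ℝ, HasDerivAt g (F (y u) z - F x z) u := fun u =>
    (hderiv u).sub ((hasDerivAt_id u).smul_const (F x z) |>.congr_deriv (by simp))
  have hbound : ∀ u ∈ Set.Icc (0:ℝ) 1, ‖F (y u) z - F x z‖ ≤ KF * L * ‖z‖ ^ 2 := by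
    intro u hu
    calc ‖F (y u) z - F x z‖ = ‖(F (y u) - F x) z‖ := by simp
      _ ≤ ‖F (y u) - F x‖ * ‖z‖ := (F (y u) - F x).le_opNorm z
      _ ≤ L * ‖y u - x‖ * ‖z‖ := by
          apply mul_le_mul_of_nonneg_right _ (norm_nonneg z)
          have := hFLip.dist_le_mul (y u) x
          rwa [dist_eq_norm, dist_eq_norm] at this
      _ ≤ L * (KF * ‖z‖) * ‖z‖ := by
          apply mul_le_mul_of_nonneg_right _ (norm_nonneg z)
          exact mul_le_mul_of_nonneg_left (hstep1 u hu) hL0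
      _ = KF * L * ‖z‖ ^ 2 := by ring
  have h := Convex.norm_image_sub_le_of_norm_hasDerivWithin_le
    (f := g) (f' := fun u => F (y u) z - F x z) (s := Set.Icc (0:ℝ) 1) (C := KF * L * ‖z‖ ^ 2)
    (fun v hv => (hgderiv v).hasDerivWithinAt) hbound
    (convex_Icc 0 1) ⟨le_refl 0, zero_le_one⟩ ⟨zero_le_one, le_refl 1⟩
  have hgval : g 1 - g 0 = φ z x - x - F x z := by
    simp only [hg, one_smul, zero_smul, sub_zero, h0, hφx]; abel
  calc ‖φ z x - x - F x z‖ = ‖g 1 - g 0‖ := by rw [hgval]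
    _ ≤ KF * L * ‖z‖ ^ 2 * ‖(1:ℝ) - 0‖ := h
    _ = KF * L * ‖z‖ ^ 2 := by simp
    _ ≤ (KF * L + 1) * ‖z‖ ^ 2 := by nlinarith [sq_nonneg ‖z‖]
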